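/- arXiv:1910.11053 — 3 statements merged into one kernel-verified Lean document; each statement's English description precedes it below -/
import Mathlib

section
/- Let X, U, Y be complex Hilbert spaces and let Σ = (A,B,C,D) be a passive system with transfer function θ(z) = D + z·C(I − zA)⁻¹B. Then the Schur kernel of θ is positive semidefinite on the open unit disk: for every n ≥ 1, every choice of points z₁,…,zₙ in the open unit disk and every choice of vectors y₁,…,yₙ ∈ Y, the number ∑_{i,j=1}^{n} (1 − zᵢ·conj(zⱼ))⁻¹ · ⟨(I_Y − θ(zᵢ)∘θ(zⱼ)*) yⱼ, yᵢ⟩ is real and nonnegative. -/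
/-!
STATEMENT 1: The Schur kernel of the transfer function of a passive system is
positive semidefinite on the open unit disk.
-/

noncomputable section

open ContinuousLinearMap
open scoped ComplexOrder InnerProductSpace

variable {X U Y : Type*}
  [NormedAddCommGroup X] [InnerProductSpace ℂ X] [CompleteSpace X]
  [NormedAddCommGroup U] [InnerProductSpace ℂ U] [CompleteSpace U]
  [NormedAddCommGroup Y] [InnerProductSpace ℂ Y] [CompleteSpace Y]

/-- The system operator `T(x,u) = (Ax + Bu, Cx + Du)` as a block operator between the
Hilbert space direct sums `X ⊕₂ U` and `X ⊕₂ Y`. -/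
def sysOp (A : X →L[ℂ] X) (B : U →L[ℂ] X) (C : X →L[ℂ] Y) (D : U →L[ℂ] Y) :
    WithLp 2 (X × U) →L[ℂ] WithLp 2 (X × Y) :=
  (((WithLp.prodContinuousLinearEquiv 2 ℂ X Y).symm : (X × Y) →L[ℂ] WithLp 2 (X × Y)).comp
      ((A.comp (fst ℂ X U) + B.comp (snd ℂ X U)).prod
        (C.comp (fst ℂ X U) + D.comp (snd ℂ X U)))).comp
    ((WithLp.prodContinuousLinearEquiv 2 ℂ X U : WithLp 2 (X × U) →L[ℂ] (X × U)))

/-- The transfer function `θ(z) = D + z·C(I − zA)⁻¹B` of the system `(A,B,C,D)`. -/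
def transferFn (A : X →L[ℂ] X) (B : U →L[ℂ] X) (C : X →L[ℂ] Y) (D : U →L[ℂ] Y) (z : ℂ) :
    U →L[ℂ] Y :=
  D + z • ((C.comp (Ring.inverse (1 - z • A))).comp B)

/-! ### Auxiliary lemmas -/

lemma sysOp_apply' (A : X →L[ℂ] X) (B : U →L[ℂ] X) (C : X →L[ℂ] Y) (D : U →L[ℂ] Y)
    (w : WithLp 2 (X × U)) :
    sysOp A B C D w = (WithLp.equiv 2 (X × Y)).symm (A w.fst + B w.snd, C w.fst + D w.snd) := by
  simp [sysOp]

lemma normA_le (A : X →L[ℂ] X) (B : U →L[ℂ] X) (C : X →L[ℂ] Y) (D : U →L[ℂ] Y)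
    (hpass : ‖sysOp A B C D‖ ≤ 1) : ‖A‖ ≤ 1 := by
  refine opNorm_le_bound _ zero_le_one fun x => ?_
  set w : WithLp 2 (X × U) := (WithLp.equiv 2 (X × U)).symm (x, 0) with hw
  have h1 : ‖sysOp A B C D w‖ ≤ ‖x‖ := by
    calc ‖sysOp A B C D w‖ ≤ ‖sysOp A B C D‖ * ‖w‖ := le_opNorm _ _
    _ ≤ 1 * ‖w‖ := by gcongr
    _ = ‖x‖ := by rw [one_mul, hw, WithLp.equiv_symm_apply, WithLp.norm_toLp_fst]
  have h2 : ‖A x‖ ≤ ‖sysOp A B C D w‖ := by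
    rw [sysOp_apply']
    have hAx : A w.fst + B w.snd = A x := by simp [hw]
    have this2 : ‖(WithLp.equiv 2 (X × Y)).symm (A w.fst + B w.snd, C w.fst + D w.snd)‖ ^ 2
        = ‖A x‖ ^ 2 + ‖C w.fst + D w.snd‖ ^ 2 := by
      rw [WithLp.prod_norm_sq_eq_of_L2]
      show ‖A w.fst + B w.snd‖ ^ 2 + _ = _
      rw [hAx]
      rfl
    nlinarith [norm_nonneg ((WithLp.equiv 2 (X × Y)).symm (A w.fst + B w.snd, C w.fst + D w.snd)),
      sq_nonneg ‖C w.fst + D w.snd‖, norm_nonneg (A x)]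
  simpa using h2.trans h1

lemma adjoint_smul' (c : ℂ) (f : X →L[ℂ] Y) :
    adjoint (c • f) = (starRingEnd ℂ) c • adjoint f := by
  ext v
  refine ext_inner_left ℂ fun w => ?_
  rw [adjoint_inner_right]
  simp [inner_smul_right, inner_smul_left, adjoint_inner_right]

lemma isUnit_one_sub_smul {A : X →L[ℂ] X} (hA : ‖A‖ ≤ 1) {z : ℂ} (hz : ‖z‖ < 1) :
    IsUnit (1 - z • A) := by
  by_cases h : z • A = 0
  · rw [h, sub_zero]; exact isUnit_one
  have hn : ‖z • A‖ < 1 := by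
    rw [norm_smul]
    nlinarith [norm_nonneg A, norm_nonneg z, norm_pos_iff.2 h, norm_smul z A]
  exact (Units.oneSub (z • A) hn).isUnit

lemma star_inv_eq {A : X →L[ℂ] X} (hA : ‖A‖ ≤ 1) {z : ℂ} (hz : ‖z‖ < 1) :
    (1 - (starRingEnd ℂ) z • adjoint A) * adjoint (Ring.inverse (1 - z • A)) = 1 := by
  have h1 : Ring.inverse (1 - z • A) * (1 - z • A) = 1 :=
    Ring.inverse_mul_cancel _ (isUnit_one_sub_smul hA hz)
  have := congrArg star h1
  rw [star_mul, star_one, star_sub, star_one, star_smul] at this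
  simp only [star_eq_adjoint, Complex.star_def] at this
  exact this

lemma g_identity {A : X →L[ℂ] X} (C : X →L[ℂ] Y) (hA : ‖A‖ ≤ 1) {z : ℂ} (hz : ‖z‖ < 1) (y : Y) :
    adjoint (Ring.inverse (1 - z • A)) (adjoint C y)
      - (starRingEnd ℂ) z • adjoint A (adjoint (Ring.inverse (1 - z • A)) (adjoint C y))
      = adjoint C y := by
  have := congrArg (fun (f : X →L[ℂ] X) => f (adjoint C y)) (star_inv_eq hA hz)
  simpa [mul_apply, sub_apply, smul_apply] using this

lemma adjoint_transferFn (A : X →L[ℂ] X) (B : U →L[ℂ] X) (C : X →L[ℂ] Y) (D : U →L[ℂ] Y)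
    {z : ℂ} (y : Y) :
    adjoint (transferFn A B C D z) y
      = adjoint D y + (starRingEnd ℂ) z •
          adjoint B (adjoint (Ring.inverse (1 - z • A)) (adjoint C y)) := by
  rw [transferFn, map_add, adjoint_smul', adjoint_comp, adjoint_comp]
  simp

lemma adjoint_sysOp_apply (A : X →L[ℂ] X) (B : U →L[ℂ] X) (C : X →L[ℂ] Y) (D : U →L[ℂ] Y)
    (p : WithLp 2 (X × Y)) :
    adjoint (sysOp A B C D) p = (WithLp.equiv 2 (X × U)).symm
      (adjoint A p.fst + adjoint C p.snd, adjoint B p.fst + adjoint D p.snd) := by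
  refine ext_inner_left ℂ fun w => ?_
  rw [adjoint_inner_right, sysOp_apply', WithLp.prod_inner_apply, WithLp.prod_inner_apply]
  show ⟪A w.fst + B w.snd, p.fst⟫_ℂ + ⟪C w.fst + D w.snd, p.snd⟫_ℂ
    = ⟪w.fst, adjoint A p.fst + adjoint C p.snd⟫_ℂ + ⟪w.snd, adjoint B p.fst + adjoint D p.snd⟫_ℂ
  simp [inner_add_left, inner_add_right, adjoint_inner_right]
  ring

lemma gram_expand {E : Type*} [NormedAddCommGroup E] [InnerProductSpace ℂ E]
    {n : ℕ} (z : Fin n → ℂ) (k : ℕ) (w : Fin n → E) :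
    ⟪∑ i, ((starRingEnd ℂ) (z i)) ^ k • w i, ∑ j, ((starRingEnd ℂ) (z j)) ^ k • w j⟫_ℂ
    = ∑ i, ∑ j, (z i * (starRingEnd ℂ) (z j)) ^ k * ⟪w i, w j⟫_ℂ := by
  rw [sum_inner]
  refine Finset.sum_congr rfl fun i _ => ?_
  rw [inner_sum]
  refine Finset.sum_congr rfl fun j _ => ?_
  rw [inner_smul_left, inner_smul_right, map_pow, Complex.conj_conj, mul_pow]
  ring

set_option maxHeartbeats 1000000 in
theorem statement1 (A : X →L[ℂ] X) (B : U →L[ℂ] X) (C : X →L[ℂ] Y) (D : U →L[ℂ] Y)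
    (hpass : ‖sysOp A B C D‖ ≤ 1)
    (n : ℕ) (hn : 1 ≤ n) (z : Fin n → ℂ) (hz : ∀ i, ‖z i‖ < 1) (y : Fin n → Y) :
    0 ≤ ∑ i, ∑ j, (1 - z i * (starRingEnd ℂ) (z j))⁻¹ *
      ⟪y i, y j - transferFn A B C D (z i)
          ((ContinuousLinearMap.adjoint (transferFn A B C D (z j))) (y j))⟫_ℂ := by
  have hA : ‖A‖ ≤ 1 := normA_le A B C D hpass
  set T := sysOp A B C D with hT
  set g : Fin n → X :=
    fun j => adjoint (Ring.inverse (1 - z j • A)) (adjoint C (y j)) with hgdef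
  set v : Fin n → WithLp 2 (X × Y) :=
    fun j => (WithLp.equiv 2 (X × Y)).symm ((starRingEnd ℂ) (z j) • g j, y j) with hvdef
  -- the adjoint of the system operator maps v j to (g j, θ(z j)* y j)
  have hTv : ∀ j, adjoint T (v j) =
      (WithLp.equiv 2 (X × U)).symm (g j, adjoint (transferFn A B C D (z j)) (y j)) := by
    intro j
    rw [hT, adjoint_sysOp_apply]
    simp only [hvdef, WithLp.equiv_symm_apply, WithLp.toLp_fst, WithLp.toLp_snd]
    refine congrArg _ (Prod.ext ?_ ?_)
    · show adjoint A ((starRingEnd ℂ) (z j) • g j) + adjoint C (y j) = g j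
      rw [map_smul]
      have h' : g j - (starRingEnd ℂ) (z j) • adjoint A (g j) = adjoint C (y j) :=
        g_identity C hA (hz j) (y j)
      rw [← h']
      module
    · show adjoint B ((starRingEnd ℂ) (z j) • g j) + adjoint D (y j) = _
      rw [adjoint_transferFn, map_smul]
      module
  -- per-pair decomposition of the kernel
  have key : ∀ i j, ⟪y i, y j - transferFn A B C D (z i)
        (adjoint (transferFn A B C D (z j)) (y j))⟫_ℂ
      = (1 - z i * (starRingEnd ℂ) (z j)) * ⟪g i, g j⟫_ℂ
        + (⟪v i, v j⟫_ℂ - ⟪adjoint T (v i), adjoint T (v j)⟫_ℂ) := by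
    intro i j
    rw [inner_sub_right, ← adjoint_inner_left, hTv, hTv,
      WithLp.prod_inner_apply, WithLp.prod_inner_apply]
    simp only [hvdef, WithLp.equiv_symm_apply, WithLp.toLp_fst, WithLp.toLp_snd]
    rw [inner_smul_left, inner_smul_right, Complex.conj_conj]
    ring
  simp_rw [key]
  have hq : ∀ i j, ‖z i * (starRingEnd ℂ) (z j)‖ < 1 := by
    intro i j
    rw [norm_mul, RCLike.norm_conj]
    calc ‖z i‖ * ‖z j‖ ≤ ‖z i‖ * 1 := by gcongr; exact le_of_lt (hz j)
    _ < 1 := by rw [mul_one]; exact hz i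
  have hne : ∀ i j, (1 : ℂ) - z i * (starRingEnd ℂ) (z j) ≠ 0 := by
    intro i j h
    rw [sub_eq_zero] at h
    have := hq i j
    rw [← h, norm_one] at this
    exact lt_irrefl _ this
  have split : ∀ i j, (1 - z i * (starRingEnd ℂ) (z j))⁻¹ *
      ((1 - z i * (starRingEnd ℂ) (z j)) * ⟪g i, g j⟫_ℂ
        + (⟪v i, v j⟫_ℂ - ⟪adjoint T (v i), adjoint T (v j)⟫_ℂ))
      = ⟪g i, g j⟫_ℂ + (1 - z i * (starRingEnd ℂ) (z j))⁻¹ *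
          (⟪v i, v j⟫_ℂ - ⟪adjoint T (v i), adjoint T (v j)⟫_ℂ) := by
    intro i j
    rw [mul_add, ← mul_assoc, inv_mul_cancel₀ (hne i j), one_mul]
  simp_rw [split]
  simp_rw [Finset.sum_add_distrib]
  apply add_nonneg
  · -- Gram part
    have : ∑ i, ∑ j, ⟪g i, g j⟫_ℂ = ⟪∑ i, g i, ∑ j, g j⟫_ℂ := by
      rw [sum_inner]
      exact Finset.sum_congr rfl fun i _ => (inner_sum _ _ _).symm
    rw [this, Complex.nonneg_iff]
    refine ⟨?_, ?_⟩
    · exact inner_self_nonneg (𝕜 := ℂ)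
    · exact (inner_self_im (𝕜 := ℂ) _).symm
  · -- defect part, via geometric series
    set Dd : Fin n → Fin n → ℂ :=
      fun i j => ⟪v i, v j⟫_ℂ - ⟪adjoint T (v i), adjoint T (v j)⟫_ℂ with hDd
    have hsummable : ∀ i j, Summable fun k : ℕ => (z i * (starRingEnd ℂ) (z j)) ^ k * Dd i j :=
      fun i j => by
        have h : Summable fun k : ℕ => (z i * (starRingEnd ℂ) (z j)) ^ k :=
          summable_geometric_of_norm_lt_one (hq i j)
        exact h.mul_right _
    have geo : ∀ i j, (1 - z i * (starRingEnd ℂ) (z j))⁻¹ * Dd i j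
        = ∑' k : ℕ, (z i * (starRingEnd ℂ) (z j)) ^ k * Dd i j := by
      intro i j
      rw [tsum_mul_right, tsum_geometric_of_norm_lt_one (hq i j)]
    show 0 ≤ ∑ i, ∑ j, (1 - z i * (starRingEnd ℂ) (z j))⁻¹ * Dd i j
    simp_rw [geo]
    rw [show ∑ i, ∑ j, ∑' k : ℕ, (z i * (starRingEnd ℂ) (z j)) ^ k * Dd i j
        = ∑' k : ℕ, ∑ i, ∑ j, (z i * (starRingEnd ℂ) (z j)) ^ k * Dd i j from by
      rw [Summable.tsum_finsetSum fun i _ => summable_sum fun j _ => hsummable i j]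
      exact Finset.sum_congr rfl fun i _ => by
        rw [Summable.tsum_finsetSum fun j _ => hsummable i j]]
    refine tsum_nonneg fun k => ?_
    -- for fixed k, the sum is ‖s‖² − ‖T* s‖² ≥ 0
    set s : WithLp 2 (X × Y) := ∑ i, ((starRingEnd ℂ) (z i)) ^ k • v i with hs
    have hTs : adjoint T s = ∑ i, ((starRingEnd ℂ) (z i)) ^ k • adjoint T (v i) := by
      simp only [hs, map_sum, map_smul]
    have hterm : ∑ i, ∑ j, (z i * (starRingEnd ℂ) (z j)) ^ k * Dd i j
        = ⟪s, s⟫_ℂ - ⟪adjoint T s, adjoint T s⟫_ℂ := by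
      rw [hs, hTs, gram_expand z k v, gram_expand z k (fun i => adjoint T (v i)), ← Finset.sum_sub_distrib]
      refine Finset.sum_congr rfl fun i _ => ?_
      rw [← Finset.sum_sub_distrib]
      refine Finset.sum_congr rfl fun j _ => ?_
      rw [hDd]
      ring
    have hTnorm : ‖adjoint T s‖ ≤ ‖s‖ := by
      calc ‖adjoint T s‖ ≤ ‖adjoint T‖ * ‖s‖ := le_opNorm _ _
      _ = ‖T‖ * ‖s‖ := by rw [LinearIsometryEquiv.norm_map]
      _ ≤ 1 * ‖s‖ := by gcongr
      _ = ‖s‖ := one_mul _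
    rw [hterm, Complex.nonneg_iff]
    refine ⟨?_, ?_⟩
    · have e1 : (⟪s, s⟫_ℂ - ⟪adjoint T s, adjoint T s⟫_ℂ).re
          = ‖s‖ ^ 2 - ‖adjoint T s‖ ^ 2 := by
        rw [Complex.sub_re, ← inner_self_eq_norm_sq (𝕜 := ℂ) s,
          ← inner_self_eq_norm_sq (𝕜 := ℂ) (adjoint T s)]
        rfl
      rw [e1]
      nlinarith [norm_nonneg s, norm_nonneg (adjoint T s)]
    · rw [Complex.sub_im]
      have i1 := inner_self_im (𝕜 := ℂ) s
      have i2 := inner_self_im (𝕜 := ℂ) (adjoint T s)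
      rw [RCLike.im_to_complex] at i1 i2
      rw [i1, i2, sub_zero]

end
end

section
/- Let X, U, Y be complex Hilbert spaces, let Σ = (A,B,C,D) be a passive system with system operator T and transfer function θ(z) = D + z·C(I − zA)⁻¹B, and let D₋ be the positive square root of I − T*∘T on X ⊕ U. Let ι_X : X → X ⊕ U and ι_U : U → X ⊕ U be the canonical inclusions, and define φ(z) := D₋∘ι_U + z·(D₋∘ι_X)∘(I − zA)⁻¹∘B : U → X ⊕ U. Then for all complex z, w with |z| < 1 and |w| < 1: I_U − θ(w)*∘θ(z) = (1 − conj(w)·z) · (B*(I − conj(w)·A*)⁻¹)∘((I − zA)⁻¹B) + φ(w)*∘φ(z). -/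
/-!
STATEMENT 3: For a passive system Σ = (A,B,C,D) with system operator T and
D₋ the positive square root of I − T*∘T on X ⊕₂ U, setting
φ(z) := D₋∘ι_U + z·(D₋∘ι_X)(I − zA)⁻¹B, one has for |z|,|w| < 1:
I_U − θ(w)*θ(z) = (1 − conj(w)·z)·(B*(I−conj(w)A*)⁻¹)∘((I−zA)⁻¹B) + φ(w)*φ(z).
-/

noncomputable section

open ContinuousLinearMap

variable {X U Y : Type*}
  [NormedAddCommGroup X] [InnerProductSpace ℂ X] [CompleteSpace X]
  [NormedAddCommGroup U] [InnerProductSpace ℂ U] [CompleteSpace U]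
  [NormedAddCommGroup Y] [InnerProductSpace ℂ Y] [CompleteSpace Y]

/-- Canonical inclusion of `X` into the Hilbert direct sum `X ⊕₂ U`. -/
def inclX : X →L[ℂ] WithLp 2 (X × U) :=
  ((WithLp.prodContinuousLinearEquiv 2 ℂ X U).symm : (X × U) →L[ℂ] WithLp 2 (X × U)).comp
    (inl ℂ X U)

/-- Canonical inclusion of `U` into the Hilbert direct sum `X ⊕₂ U`. -/
def inclU : U →L[ℂ] WithLp 2 (X × U) :=
  ((WithLp.prodContinuousLinearEquiv 2 ℂ X U).symm : (X × U) →L[ℂ] WithLp 2 (X × U)).comp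
    (inr ℂ X U)

/-- The function `φ(z) = D₋∘ι_U + z·(D₋∘ι_X)(I − zA)⁻¹B`. -/
def phiFn (A : X →L[ℂ] X) (B : U →L[ℂ] X)
    (Dm : WithLp 2 (X × U) →L[ℂ] WithLp 2 (X × U)) (z : ℂ) : U →L[ℂ] WithLp 2 (X × U) :=
  Dm.comp inclU + z • ((Dm.comp inclX).comp ((Ring.inverse (1 - z • A)).comp B))


namespace St3Aux

set_option linter.unusedSectionVars false

variable {E F G : Type*}
  [NormedAddCommGroup E] [InnerProductSpace ℂ E] [CompleteSpace E]
  [NormedAddCommGroup F] [InnerProductSpace ℂ F] [CompleteSpace F]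
  [NormedAddCommGroup G] [InnerProductSpace ℂ G] [CompleteSpace G]

/-- left inclusion into `E ⊕₂ F` -/
def inl2 : E →L[ℂ] WithLp 2 (E × F) :=
  ((WithLp.prodContinuousLinearEquiv 2 ℂ E F).symm : (E × F) →L[ℂ] WithLp 2 (E × F)).comp
    (inl ℂ E F)

/-- right inclusion into `E ⊕₂ F` -/
def inr2 : F →L[ℂ] WithLp 2 (E × F) :=
  ((WithLp.prodContinuousLinearEquiv 2 ℂ E F).symm : (E × F) →L[ℂ] WithLp 2 (E × F)).comp
    (inr ℂ E F)

lemma inl2_apply (x : E) : (inl2 (F := F) x) = (WithLp.equiv 2 (E × F)).symm (x, 0) := rfl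
lemma inr2_apply (y : F) : (inr2 (E := E) y) = (WithLp.equiv 2 (E × F)).symm (0, y) := rfl

@[simp] lemma adj_inl2_inl2 :
    (adjoint (inl2 : E →L[ℂ] WithLp 2 (E × F))) ∘L inl2 = 1 := by
  ext x
  apply ext_inner_left ℂ
  intro v
  simp [adjoint_inner_right, inl2_apply, WithLp.prod_inner_apply]

@[simp] lemma adj_inr2_inr2 :
    (adjoint (inr2 : F →L[ℂ] WithLp 2 (E × F))) ∘L inr2 = 1 := by
  ext x
  apply ext_inner_left ℂ
  intro v
  simp [adjoint_inner_right, inr2_apply, WithLp.prod_inner_apply]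

@[simp] lemma adj_inl2_inr2 :
    (adjoint (inl2 : E →L[ℂ] WithLp 2 (E × F))) ∘L inr2 = 0 := by
  ext x
  apply ext_inner_left ℂ
  intro v
  simp [adjoint_inner_right, inl2_apply, inr2_apply, WithLp.prod_inner_apply]

@[simp] lemma adj_inr2_inl2 :
    (adjoint (inr2 : F →L[ℂ] WithLp 2 (E × F))) ∘L inl2 = 0 := by
  ext x
  apply ext_inner_left ℂ
  intro v
  simp [adjoint_inner_right, inl2_apply, inr2_apply, WithLp.prod_inner_apply]

@[simp] lemma adj_inl2_inl2_comp (f : G →L[ℂ] E) :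
    (adjoint (inl2 : E →L[ℂ] WithLp 2 (E × F))) ∘L (inl2 ∘L f) = f := by
  rw [← comp_assoc, adj_inl2_inl2, one_def, id_comp]

@[simp] lemma adj_inr2_inr2_comp (f : G →L[ℂ] F) :
    (adjoint (inr2 : F →L[ℂ] WithLp 2 (E × F))) ∘L (inr2 ∘L f) = f := by
  rw [← comp_assoc, adj_inr2_inr2, one_def, id_comp]

@[simp] lemma adj_inl2_inr2_comp (f : G →L[ℂ] F) :
    (adjoint (inl2 : E →L[ℂ] WithLp 2 (E × F))) ∘L (inr2 ∘L f) = 0 := by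
  rw [← comp_assoc, adj_inl2_inr2, zero_comp]

@[simp] lemma adj_inr2_inl2_comp (f : G →L[ℂ] E) :
    (adjoint (inr2 : F →L[ℂ] WithLp 2 (E × F))) ∘L (inl2 ∘L f) = 0 := by
  rw [← comp_assoc, adj_inr2_inl2, zero_comp]

lemma norm_inl2_le : ‖(inl2 : E →L[ℂ] WithLp 2 (E × F))‖ ≤ 1 := by
  refine opNorm_le_bound _ zero_le_one fun x => ?_
  rw [inl2_apply, WithLp.equiv_symm_apply, WithLp.norm_toLp_fst, one_mul]

lemma isUnit_one_sub_of_norm_lt {R : Type*} [NormedRing R] [CompleteSpace R] {t : R}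
    (h : ‖t‖ < 1) : IsUnit (1 - t) := ⟨Units.oneSub t h, rfl⟩

lemma adjoint_smul (c : ℂ) (f : E →L[ℂ] F) :
    adjoint (c • f) = (starRingEnd ℂ) c • adjoint f := by
  ext y
  apply ext_inner_left ℂ
  intro v
  simp [adjoint_inner_right, inner_smul_left, inner_smul_right]

lemma adjoint_one : adjoint (1 : E →L[ℂ] E) = 1 := by
  ext y
  apply ext_inner_left ℂ
  intro v
  simp [adjoint_inner_right]

lemma adjoint_sub (f g : E →L[ℂ] F) : adjoint (f - g) = adjoint f - adjoint g :=
  map_sub (adjoint : (E →L[ℂ] F) ≃ₗᵢ⋆[ℂ] (F →L[ℂ] E)).toLinearEquiv f g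

lemma adjoint_add (f g : E →L[ℂ] F) : adjoint (f + g) = adjoint f + adjoint g :=
  map_add (adjoint : (E →L[ℂ] F) ≃ₗᵢ⋆[ℂ] (F →L[ℂ] E)).toLinearEquiv f g

lemma adjoint_ringInverse {M : E →L[ℂ] E} (h : IsUnit M) :
    adjoint (Ring.inverse M) = Ring.inverse (adjoint M) := by
  obtain ⟨u, rfl⟩ := h
  have h1 : adjoint ((u : E →L[ℂ] E)) * adjoint ((u⁻¹ : (E →L[ℂ] E)ˣ) : E →L[ℂ] E) = 1 := by
    rw [mul_def, ← adjoint_comp, ← mul_def, u.inv_mul, adjoint_one]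
  have h2 : adjoint ((u⁻¹ : (E →L[ℂ] E)ˣ) : E →L[ℂ] E) * adjoint ((u : E →L[ℂ] E)) = 1 := by
    rw [mul_def, ← adjoint_comp, ← mul_def, u.mul_inv, adjoint_one]
  let v : (E →L[ℂ] E)ˣ :=
    ⟨adjoint ((u : E →L[ℂ] E)), adjoint ((u⁻¹ : (E →L[ℂ] E)ˣ) : E →L[ℂ] E), h1, h2⟩
  rw [Ring.inverse_unit u, show adjoint ((u : E →L[ℂ] E)) = (v : E →L[ℂ] E) from rfl,
    Ring.inverse_unit v]
  rfl

end St3Aux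

open St3Aux

section St3SysOp

set_option linter.unusedSectionVars false

lemma sysOp_comp_inl2 (A : X →L[ℂ] X) (B : U →L[ℂ] X) (C : X →L[ℂ] Y) (D : U →L[ℂ] Y) :
    (sysOp A B C D) ∘L (inl2 : X →L[ℂ] WithLp 2 (X × U)) = inl2 ∘L A + inr2 ∘L C := by
  ext x
  apply (WithLp.prodContinuousLinearEquiv 2 ℂ X Y).injective
  simp [sysOp, inl2, inr2]

lemma sysOp_comp_inr2 (A : X →L[ℂ] X) (B : U →L[ℂ] X) (C : X →L[ℂ] Y) (D : U →L[ℂ] Y) :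
    (sysOp A B C D) ∘L (inr2 : U →L[ℂ] WithLp 2 (X × U)) = inl2 ∘L B + inr2 ∘L D := by
  ext x
  apply (WithLp.prodContinuousLinearEquiv 2 ℂ X Y).injective
  simp [sysOp, inl2, inr2]

end St3SysOp


lemma adjoint_id' {E : Type*} [NormedAddCommGroup E] [InnerProductSpace ℂ E] [CompleteSpace E] :
    ContinuousLinearMap.adjoint (ContinuousLinearMap.id ℂ E) = ContinuousLinearMap.id ℂ E :=
  ContinuousLinearMap.adjoint_id

set_option maxHeartbeats 2000000

theorem statement3 (A : X →L[ℂ] X) (B : U →L[ℂ] X) (C : X →L[ℂ] Y) (D : U →L[ℂ] Y)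
    (hpass : ‖sysOp A B C D‖ ≤ 1)
    (Dm : WithLp 2 (X × U) →L[ℂ] WithLp 2 (X × U))
    (hDm_pos : Dm.IsPositive)
    (hDm_sq : Dm.comp Dm
      = ContinuousLinearMap.id ℂ (WithLp 2 (X × U))
        - (ContinuousLinearMap.adjoint (sysOp A B C D)).comp (sysOp A B C D))
    (z w : ℂ) (hz : ‖z‖ < 1) (hw : ‖w‖ < 1) :
    ContinuousLinearMap.id ℂ U
        - (ContinuousLinearMap.adjoint (transferFn A B C D w)).comp (transferFn A B C D z)
      = ((1 : ℂ) - (starRingEnd ℂ) w * z) •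
          (((ContinuousLinearMap.adjoint B).comp
              (Ring.inverse (1 - (starRingEnd ℂ) w • ContinuousLinearMap.adjoint A))).comp
            ((Ring.inverse (1 - z • A)).comp B))
        + (ContinuousLinearMap.adjoint (phiFn A B Dm w)).comp (phiFn A B Dm z) := by
  classical
  set T := sysOp A B C D with hTdef
  have hTX : T ∘L (inl2 : X →L[ℂ] WithLp 2 (X × U)) = inl2 ∘L A + inr2 ∘L C :=
    sysOp_comp_inl2 A B C D
  have hTU : T ∘L (inr2 : U →L[ℂ] WithLp 2 (X × U)) = inl2 ∘L B + inr2 ∘L D :=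
    sysOp_comp_inr2 A B C D
  -- ‖A‖ ≤ 1
  have hA_eq : A = adjoint (inl2 : X →L[ℂ] WithLp 2 (X × Y)) ∘L (T ∘L inl2) := by
    rw [hTX, comp_add, adj_inl2_inl2_comp, adj_inl2_inr2_comp, add_zero]
  have hadjnorm : ‖adjoint (inl2 : X →L[ℂ] WithLp 2 (X × Y))‖ ≤ 1 := by
    rw [LinearIsometryEquiv.norm_map]
    exact norm_inl2_le
  have hAnorm : ‖A‖ ≤ 1 := by
    rw [hA_eq]
    have h1 := opNorm_comp_le (adjoint (inl2 : X →L[ℂ] WithLp 2 (X × Y))) (T ∘L inl2)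
    have h2 := opNorm_comp_le T (inl2 : X →L[ℂ] WithLp 2 (X × U))
    have h3 : ‖(inl2 : X →L[ℂ] WithLp 2 (X × U))‖ ≤ 1 := norm_inl2_le
    have h4 : (0:ℝ) ≤ ‖T‖ := ContinuousLinearMap.opNorm_nonneg T
    have h5 : (0:ℝ) ≤ ‖T ∘L (inl2 : X →L[ℂ] WithLp 2 (X × U))‖ :=
      ContinuousLinearMap.opNorm_nonneg _
    have h6 : (0:ℝ) ≤ ‖adjoint (inl2 : X →L[ℂ] WithLp 2 (X × Y))‖ :=
      ContinuousLinearMap.opNorm_nonneg _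
    nlinarith
  -- units
  have hsmul : ∀ ζ : ℂ, ‖ζ‖ < 1 → IsUnit (1 - ζ • A) := by
    intro ζ hζ
    apply isUnit_one_sub_of_norm_lt
    rw [norm_smul]
    calc ‖ζ‖ * ‖A‖ ≤ ‖ζ‖ * 1 := mul_le_mul_of_nonneg_left hAnorm (norm_nonneg ζ)
      _ = ‖ζ‖ := mul_one _
      _ < 1 := hζ
  have hzu : IsUnit (1 - z • A) := hsmul z hz
  have hwu : IsUnit (1 - w • A) := hsmul w hw
  set Sz : U →L[ℂ] X := (Ring.inverse (1 - z • A)) ∘L B with hSz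
  set Sw : U →L[ℂ] X := (Ring.inverse (1 - w • A)) ∘L B with hSw
  set Pz : U →L[ℂ] WithLp 2 (X × U) := inr2 + z • (inl2 ∘L Sz) with hPz
  set Pw : U →L[ℂ] WithLp 2 (X × U) := inr2 + w • (inl2 ∘L Sw) with hPw
  have hinclX : (inclX : X →L[ℂ] WithLp 2 (X × U)) = inl2 := rfl
  have hinclU : (inclU : U →L[ℂ] WithLp 2 (X × U)) = inr2 := rfl
  have hphiz : phiFn A B Dm z = Dm ∘L Pz := by
    simp only [phiFn, hinclX, hinclU]
    rw [hPz, comp_add, comp_smul, comp_assoc]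
  have hphiw : phiFn A B Dm w = Dm ∘L Pw := by
    simp only [phiFn, hinclX, hinclU]
    rw [hPw, comp_add, comp_smul, comp_assoc]
  -- key: T ∘L Pζ
  have key : ∀ (ζ : ℂ) (hu : IsUnit (1 - ζ • A)),
      T ∘L (inr2 + ζ • (inl2 ∘L ((Ring.inverse (1 - ζ • A)) ∘L B)))
        = inl2 ∘L ((Ring.inverse (1 - ζ • A)) ∘L B) + inr2 ∘L transferFn A B C D ζ := by
    intro ζ hu
    set S : U →L[ℂ] X := (Ring.inverse (1 - ζ • A)) ∘L B with hS
    have h1 : (1 - ζ • A) ∘L (Ring.inverse (1 - ζ • A)) = 1 := by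
      rw [← mul_def]; exact Ring.mul_inverse_cancel _ hu
    have hSB : B + ζ • (A ∘L S) = S := by
      have h2 : ((1 - ζ • A) ∘L (Ring.inverse (1 - ζ • A))) ∘L B = B := by
        rw [h1, one_def, id_comp]
      rw [comp_assoc, ← hS, sub_comp, one_def, id_comp, smul_comp] at h2
      rw [← h2]
      abel
    have hθ : transferFn A B C D ζ = D + ζ • (C ∘L S) := by
      rw [transferFn, hS, comp_assoc]
    have hiS := congrArg
      (fun f : U →L[ℂ] X => (inl2 : X →L[ℂ] WithLp 2 (X × Y)) ∘L f) hSB.symm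
    simp only [comp_add, comp_smul] at hiS
    rw [comp_add, hTU, comp_smul, ← comp_assoc, hTX, hθ, hiS]
    simp only [add_comp, comp_add, comp_smul, smul_comp, comp_assoc, smul_add]
    abel
  have hTPz : T ∘L Pz = inl2 ∘L Sz + inr2 ∘L transferFn A B C D z := key z hzu
  have hTPw : T ∘L Pw = inl2 ∘L Sw + inr2 ∘L transferFn A B C D w := key w hwu
  -- adjoint Pw ∘ Pz
  have hQP : adjoint Pw ∘L Pz = 1 + ((starRingEnd ℂ) w * z) • (adjoint Sw ∘L Sz) := by
    rw [hPw, hPz, adjoint_add, adjoint_smul, adjoint_comp]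
    simp only [comp_add, add_comp, comp_smul, smul_comp, comp_assoc, adj_inr2_inr2,
      adj_inl2_inl2, adj_inl2_inr2, adj_inr2_inl2,
      adj_inr2_inl2_comp, adj_inl2_inr2_comp, adj_inl2_inl2_comp, adj_inr2_inr2_comp,
      comp_zero, zero_comp, smul_zero, add_zero, zero_add, smul_smul]
    module
  -- adjoint (T Pw) ∘ (T Pz)
  have hTT : adjoint (T ∘L Pw) ∘L (T ∘L Pz)
      = adjoint Sw ∘L Sz
        + adjoint (transferFn A B C D w) ∘L transferFn A B C D z := by
    rw [hTPw, hTPz, adjoint_add]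
    simp only [adjoint_comp, comp_add, add_comp, comp_assoc, adj_inl2_inl2_comp,
      adj_inl2_inr2_comp, adj_inr2_inl2_comp, adj_inr2_inr2_comp, comp_zero, zero_comp,
      add_zero, zero_add]
  -- self-adjointness and square of Dm
  have hDm_sa : adjoint Dm = Dm := isSelfAdjoint_iff'.mp hDm_pos.isSelfAdjoint
  have hDmDm : Dm ∘L Dm = 1 - adjoint T ∘L T := by
    rw [hDm_sq]; rfl
  -- the φ product
  have hfinal : adjoint (phiFn A B Dm w) ∘L phiFn A B Dm z
      = (1 + ((starRingEnd ℂ) w * z) • (adjoint Sw ∘L Sz))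
        - (adjoint Sw ∘L Sz
            + adjoint (transferFn A B C D w) ∘L transferFn A B C D z) := by
    rw [hphiw, hphiz, adjoint_comp, comp_assoc, ← comp_assoc (adjoint Dm) Dm Pz,
      hDm_sa, hDmDm, sub_comp, one_def, id_comp, comp_sub,
      comp_assoc (adjoint T) T Pz, ← comp_assoc (adjoint Pw) (adjoint T) (T ∘L Pz),
      ← adjoint_comp, hQP, hTT]
  -- adjoint of Sw
  have hSwadj : adjoint Sw
      = (adjoint B) ∘L Ring.inverse (1 - (starRingEnd ℂ) w • adjoint A) := by
    rw [hSw, adjoint_comp, adjoint_ringInverse hwu, adjoint_sub, St3Aux.adjoint_one, adjoint_smul]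
  -- finish
  have hmid : ((adjoint B).comp
        (Ring.inverse (1 - (starRingEnd ℂ) w • ContinuousLinearMap.adjoint A))).comp
      ((Ring.inverse (1 - z • A)).comp B) = adjoint Sw ∘L Sz := by
    rw [hSwadj, hSz]
  rw [hmid, hfinal]
  have hid : ContinuousLinearMap.id ℂ U = (1 : U →L[ℂ] U) := rfl
  rw [hid]
  set K := adjoint Sw ∘L Sz
  set θ := adjoint (transferFn A B C D w) ∘L transferFn A B C D z
  module


end
end

section
/- Let X, X₀, U be complex Hilbert spaces, let A : X → X, B : U → X, A₀ : X₀ → X₀, B₀ : U → X₀ be bounded linear operators, and suppose there is ε > 0 with ε·‖A‖ < 1 and ε·‖A₀‖ < 1 such that for all complex z, w with |z| < ε and |w| < ε: B*∘(I − conj(w)·A*)⁻¹∘(I − zA)⁻¹∘B = B₀*∘(I − conj(w)·A₀*)⁻¹∘(I − zA₀)⁻¹∘B₀. Then for every n ≥ 0 and all u₀,…,uₙ ∈ U: ‖∑_{k=0}^{n} Aᵏ(B uₖ)‖ = ‖∑_{k=0}^{n} A₀ᵏ(B₀ uₖ)‖. -/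
/-!
STATEMENT 10: If B*(I − w̄A*)⁻¹(I − zA)⁻¹B = B₀*(I − w̄A₀*)⁻¹(I − zA₀)⁻¹B₀ for all
z, w in a neighbourhood of the origin, then ‖∑ₖ Aᵏ(Buₖ)‖ = ‖∑ₖ A₀ᵏ(B₀uₖ)‖ for all
finite families uₖ in U.
-/

noncomputable section

open ContinuousLinearMap

variable {X X₀ U : Type*}
  [NormedAddCommGroup X] [InnerProductSpace ℂ X] [CompleteSpace X]
  [NormedAddCommGroup X₀] [InnerProductSpace ℂ X₀] [CompleteSpace X₀]
  [NormedAddCommGroup U] [InnerProductSpace ℂ U] [CompleteSpace U]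

/-- The resolvent-type expansion: for `‖z‖ * ‖T‖ < 1`, `(1 - z•T)⁻¹ x = ∑ zᵏ • Tᵏ x`. -/
private lemma aux_hasSum_inv {Y : Type*} [NormedAddCommGroup Y] [NormedSpace ℂ Y]
    [CompleteSpace Y] (T : Y →L[ℂ] Y) (z : ℂ) (h : ‖z‖ * ‖T‖ < 1) (x : Y) :
    HasSum (fun k : ℕ => z ^ k • (T ^ k) x) ((Ring.inverse (1 - z • T)) x) := by
  have h1 : ‖z • T‖ < 1 := lt_of_le_of_lt (norm_smul z T).le h
  have h2 := hasSum_geom_series_inverse (z • T) h1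
  have h3 := h2.mapL (ContinuousLinearMap.apply ℂ Y x)
  simp only [ContinuousLinearMap.apply_apply] at h3
  convert h3 using 2 with k
  rw [smul_pow, ContinuousLinearMap.smul_apply]

private lemma aux_hasFPS (a : ℕ → ℂ) (C M ε : ℝ) (hε : 0 < ε) (hM : 0 ≤ M) (hεM : ε * M < 1)
    (ha : ∀ k, ‖a k‖ ≤ C * M ^ k) :
    HasFPowerSeriesOnBall (fun z : ℂ => ∑' k, a k * z ^ k)
      (FormalMultilinearSeries.ofScalars ℂ a) 0 (ENNReal.ofReal ε) := by
  have hC : 0 ≤ C := le_trans (norm_nonneg (a 0)) (by simpa using ha 0)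
  have hεM' : 0 ≤ ε * M := mul_nonneg hε.le hM
  have hsum : ∀ y : ℂ, ‖y‖ < ε → Summable fun k => a k * y ^ k := by
    intro y hy
    have hr : 0 ≤ M * ‖y‖ := mul_nonneg hM (norm_nonneg _)
    have hr1 : M * ‖y‖ < 1 :=
      lt_of_le_of_lt (by nlinarith [norm_nonneg y]) hεM
    refine Summable.of_norm_bounded
      ((summable_geometric_of_lt_one hr hr1).mul_left C) ?_
    intro k
    simp only [norm_mul, norm_pow, mul_pow]
    have h1 : ‖a k‖ * ‖y‖ ^ k ≤ (C * M ^ k) * ‖y‖ ^ k := by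
      have := pow_nonneg (norm_nonneg y) k
      exact mul_le_mul_of_nonneg_right (ha k) this
    calc ‖a k‖ * ‖y‖ ^ k ≤ (C * M ^ k) * ‖y‖ ^ k := h1
      _ = C * (M ^ k * ‖y‖ ^ k) := by ring
  constructor
  · -- radius bound
    refine le_trans (le_of_eq ?_) ((FormalMultilinearSeries.ofScalars ℂ a).le_radius_of_bound
      (r := ε.toNNReal) C ?_)
    · rfl
    · intro n
      rw [FormalMultilinearSeries.ofScalars_norm]
      have h1 : ‖a n‖ * (ε.toNNReal : ℝ) ^ n ≤ (C * M ^ n) * ε ^ n := by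
        rw [Real.coe_toNNReal _ hε.le]
        exact mul_le_mul_of_nonneg_right (ha n) (pow_nonneg hε.le n)
      calc ‖a n‖ * (ε.toNNReal : ℝ) ^ n ≤ (C * M ^ n) * ε ^ n := h1
        _ = C * (ε * M) ^ n := by ring
        _ ≤ C * 1 := mul_le_mul_of_nonneg_left (pow_le_one₀ hεM' hεM.le) hC
        _ = C := mul_one C
  · exact ENNReal.ofReal_pos.mpr hε
  · intro y hy
    rw [EMetric.mem_ball, edist_zero_right, ← ofReal_norm] at hy
    have hy' : ‖y‖ < ε := (ENNReal.ofReal_lt_ofReal_iff hε).mp hy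
    simp only [FormalMultilinearSeries.ofScalars_apply_eq, zero_add, smul_eq_mul]
    have hh := (hsum y hy').hasSum
    convert hh using 2 with k

/-- Uniqueness of power series coefficients, with geometric bounds. -/
private lemma aux_coeff_unique (a b : ℕ → ℂ) (Ca Cb Ma Mb ε : ℝ) (hε : 0 < ε)
    (hMa : 0 ≤ Ma) (hMb : 0 ≤ Mb) (hεMa : ε * Ma < 1) (hεMb : ε * Mb < 1)
    (ha : ∀ k, ‖a k‖ ≤ Ca * Ma ^ k) (hb : ∀ k, ‖b k‖ ≤ Cb * Mb ^ k)
    (h : ∀ z : ℂ, ‖z‖ < ε → ∑' k, a k * z ^ k = ∑' k, b k * z ^ k) :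
    a = b := by
  have hfa := (aux_hasFPS a Ca Ma ε hε hMa hεMa ha).hasFPowerSeriesAt
  have hfb := (aux_hasFPS b Cb Mb ε hε hMb hεMb hb).hasFPowerSeriesAt
  have heq : (fun z : ℂ => ∑' k, a k * z ^ k) =ᶠ[nhds 0] fun z => ∑' k, b k * z ^ k := by
    filter_upwards [Metric.ball_mem_nhds (0 : ℂ) hε] with z hz
    exact h z (by simpa using hz)
  have hser := hfa.eq_formalMultilinearSeries_of_eventually hfb heq
  exact FormalMultilinearSeries.ofScalars_series_injective ℂ ℂ hser

private lemma aux_pow_apply_norm {Y : Type*} [NormedAddCommGroup Y] [NormedSpace ℂ Y]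
    (T : Y →L[ℂ] Y) (x : Y) (k : ℕ) : ‖(T ^ k) x‖ ≤ ‖T‖ ^ k * ‖x‖ := by
  induction k with
  | zero => simp
  | succ n ih =>
    rw [pow_succ', pow_succ, ContinuousLinearMap.mul_apply]
    calc ‖T ((T ^ n) x)‖ ≤ ‖T‖ * ‖(T ^ n) x‖ := T.le_opNorm _
      _ ≤ ‖T‖ * (‖T‖ ^ n * ‖x‖) := by gcongr
      _ = ‖T‖ ^ n * ‖T‖ * ‖x‖ := by ring

set_option maxHeartbeats 2000000 in
theorem statement10 (A : X →L[ℂ] X) (B : U →L[ℂ] X)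
    (A₀ : X₀ →L[ℂ] X₀) (B₀ : U →L[ℂ] X₀)
    (ε : ℝ) (hε : 0 < ε) (hA : ε * ‖A‖ < 1) (hA₀ : ε * ‖A₀‖ < 1)
    (h : ∀ z w : ℂ, ‖z‖ < ε → ‖w‖ < ε →
      ((ContinuousLinearMap.adjoint B).comp
          (Ring.inverse (1 - (starRingEnd ℂ) w • ContinuousLinearMap.adjoint A))).comp
        ((Ring.inverse (1 - z • A)).comp B)
      = ((ContinuousLinearMap.adjoint B₀).comp
          (Ring.inverse (1 - (starRingEnd ℂ) w • ContinuousLinearMap.adjoint A₀))).comp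
        ((Ring.inverse (1 - z • A₀)).comp B₀))
    (n : ℕ) (u : Fin (n + 1) → U) :
    ‖∑ k : Fin (n + 1), (A ^ (k : ℕ)) (B (u k))‖
      = ‖∑ k : Fin (n + 1), (A₀ ^ (k : ℕ)) (B₀ (u k))‖ := by
  have hAadj : ‖ContinuousLinearMap.adjoint A‖ = ‖A‖ :=
    ContinuousLinearMap.adjoint.norm_map A
  have hA₀adj : ‖ContinuousLinearMap.adjoint A₀‖ = ‖A₀‖ :=
    ContinuousLinearMap.adjoint.norm_map A₀
  have hz1 : ∀ z : ℂ, ‖z‖ < ε → ‖z‖ * ‖A‖ < 1 := fun z hz =>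
    lt_of_le_of_lt (mul_le_mul_of_nonneg_right hz.le (norm_nonneg A)) hA
  have hz2 : ∀ z : ℂ, ‖z‖ < ε → ‖z‖ * ‖A₀‖ < 1 := fun z hz =>
    lt_of_le_of_lt (mul_le_mul_of_nonneg_right hz.le (norm_nonneg A₀)) hA₀
  have hz3 : ∀ w : ℂ, ‖w‖ < ε → ‖w‖ * ‖ContinuousLinearMap.adjoint A‖ < 1 := fun w hw => by
    rw [hAadj]; exact hz1 w hw
  have hz4 : ∀ w : ℂ, ‖w‖ < ε → ‖w‖ * ‖ContinuousLinearMap.adjoint A₀‖ < 1 := fun w hw => by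
    rw [hA₀adj]; exact hz2 w hw
  -- Key: equality of all mixed inner products
  have key : ∀ (uu vv : U) (j k : ℕ),
      (inner ℂ ((A ^ j) (B vv)) ((A ^ k) (B uu)) : ℂ)
        = inner ℂ ((A₀ ^ j) (B₀ vv)) ((A₀ ^ k) (B₀ uu)) := by
    intro uu vv j k
    set L : ℂ → (X →L[ℂ] ℂ) := fun w =>
      ((innerSL ℂ vv).comp ((ContinuousLinearMap.adjoint B).comp
        (Ring.inverse (1 - w • ContinuousLinearMap.adjoint A)))) with hL
    set L₀ : ℂ → (X₀ →L[ℂ] ℂ) := fun w =>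
      ((innerSL ℂ vv).comp ((ContinuousLinearMap.adjoint B₀).comp
        (Ring.inverse (1 - w • ContinuousLinearMap.adjoint A₀)))) with hL₀
    set c : ℂ → ℕ → ℂ := fun w m => L w ((A ^ m) (B uu)) with hc
    set c₀ : ℂ → ℕ → ℂ := fun w m => L₀ w ((A₀ ^ m) (B₀ uu)) with hc₀
    -- Step 1: for each fixed w, the coefficient families in z agree
    have step1 : ∀ w : ℂ, ‖w‖ < ε → c w = c₀ w := by
      intro w hw
      apply aux_coeff_unique (c w) (c₀ w) (‖L w‖ * ‖B uu‖) (‖L₀ w‖ * ‖B₀ uu‖)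
        ‖A‖ ‖A₀‖ ε hε (norm_nonneg A) (norm_nonneg A₀) hA hA₀
      · intro m
        calc ‖c w m‖ ≤ ‖L w‖ * ‖(A ^ m) (B uu)‖ := (L w).le_opNorm _
          _ ≤ ‖L w‖ * (‖A‖ ^ m * ‖B uu‖) := by
              exact mul_le_mul_of_nonneg_left (aux_pow_apply_norm A (B uu) m) (norm_nonneg _)
          _ = ‖L w‖ * ‖B uu‖ * ‖A‖ ^ m := by ring
      · intro m
        calc ‖c₀ w m‖ ≤ ‖L₀ w‖ * ‖(A₀ ^ m) (B₀ uu)‖ := (L₀ w).le_opNorm _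
          _ ≤ ‖L₀ w‖ * (‖A₀‖ ^ m * ‖B₀ uu‖) := by
              exact mul_le_mul_of_nonneg_left (aux_pow_apply_norm A₀ (B₀ uu) m) (norm_nonneg _)
          _ = ‖L₀ w‖ * ‖B₀ uu‖ * ‖A₀‖ ^ m := by ring
      · intro z hz
        have hsA := (aux_hasSum_inv A z (hz1 z hz) (B uu)).mapL (L w)
        have hsA' : HasSum (fun m => c w m * z ^ m)
            (L w ((Ring.inverse (1 - z • A)) (B uu))) := by
          convert hsA using 2 with m
          rw [map_smul, smul_eq_mul, mul_comm]
        have hsB := (aux_hasSum_inv A₀ z (hz2 z hz) (B₀ uu)).mapL (L₀ w)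
        have hsB' : HasSum (fun m => c₀ w m * z ^ m)
            (L₀ w ((Ring.inverse (1 - z • A₀)) (B₀ uu))) := by
          convert hsB using 2 with m
          rw [map_smul, smul_eq_mul, mul_comm]
        rw [hsA'.tsum_eq, hsB'.tsum_eq]
        have hwc : ‖(starRingEnd ℂ) w‖ < ε := by rwa [RCLike.norm_conj]
        have hE := h z ((starRingEnd ℂ) w) hz hwc
        rw [starRingEnd_self_apply] at hE
        have h2 := congrArg (fun T : U →L[ℂ] U => (inner ℂ vv (T uu) : ℂ)) hE
        simp only [ContinuousLinearMap.comp_apply] at h2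
        simpa [hL, hL₀, ContinuousLinearMap.comp_apply] using h2
    -- Step 2: for fixed k, extract coefficients in w
    set d : ℕ → ℂ := fun j => (inner ℂ vv ((ContinuousLinearMap.adjoint B)
      (((ContinuousLinearMap.adjoint A) ^ j) ((A ^ k) (B uu)))) : ℂ) with hd
    set d₀ : ℕ → ℂ := fun j => (inner ℂ vv ((ContinuousLinearMap.adjoint B₀)
      (((ContinuousLinearMap.adjoint A₀) ^ j) ((A₀ ^ k) (B₀ uu)))) : ℂ) with hd₀
    set L2 : X →L[ℂ] ℂ := (innerSL ℂ vv).comp (ContinuousLinearMap.adjoint B) with hL2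
    set L2₀ : X₀ →L[ℂ] ℂ := (innerSL ℂ vv).comp (ContinuousLinearMap.adjoint B₀) with hL2₀
    have step2 : d = d₀ := by
      apply aux_coeff_unique d d₀ (‖L2‖ * ‖(A ^ k) (B uu)‖) (‖L2₀‖ * ‖(A₀ ^ k) (B₀ uu)‖)
        ‖A‖ ‖A₀‖ ε hε (norm_nonneg A) (norm_nonneg A₀) hA hA₀
      · intro j
        calc ‖d j‖ = ‖L2 (((ContinuousLinearMap.adjoint A) ^ j) ((A ^ k) (B uu)))‖ := by
              simp [hd, hL2]
          _ ≤ ‖L2‖ * ‖((ContinuousLinearMap.adjoint A) ^ j) ((A ^ k) (B uu))‖ := L2.le_opNorm _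
          _ ≤ ‖L2‖ * (‖ContinuousLinearMap.adjoint A‖ ^ j * ‖(A ^ k) (B uu)‖) := by
              exact mul_le_mul_of_nonneg_left
                (aux_pow_apply_norm (ContinuousLinearMap.adjoint A) _ j) (norm_nonneg _)
          _ = ‖L2‖ * ‖(A ^ k) (B uu)‖ * ‖A‖ ^ j := by rw [hAadj]; ring
      · intro j
        calc ‖d₀ j‖ = ‖L2₀ (((ContinuousLinearMap.adjoint A₀) ^ j) ((A₀ ^ k) (B₀ uu)))‖ := by
              simp [hd₀, hL2₀]
          _ ≤ ‖L2₀‖ * ‖((ContinuousLinearMap.adjoint A₀) ^ j) ((A₀ ^ k) (B₀ uu))‖ :=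
              L2₀.le_opNorm _
          _ ≤ ‖L2₀‖ * (‖ContinuousLinearMap.adjoint A₀‖ ^ j * ‖(A₀ ^ k) (B₀ uu)‖) := by
              exact mul_le_mul_of_nonneg_left
                (aux_pow_apply_norm (ContinuousLinearMap.adjoint A₀) _ j) (norm_nonneg _)
          _ = ‖L2₀‖ * ‖(A₀ ^ k) (B₀ uu)‖ * ‖A₀‖ ^ j := by rw [hA₀adj]; ring
      · intro w hw
        have hsW := (aux_hasSum_inv (ContinuousLinearMap.adjoint A) w (hz3 w hw)
          ((A ^ k) (B uu))).mapL L2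
        have hsW' : HasSum (fun j => d j * w ^ j)
            (L2 ((Ring.inverse (1 - w • ContinuousLinearMap.adjoint A)) ((A ^ k) (B uu)))) := by
          convert hsW using 2 with j
          rw [map_smul, smul_eq_mul, mul_comm]
          simp [hd, hL2]
        have hsW₀ := (aux_hasSum_inv (ContinuousLinearMap.adjoint A₀) w (hz4 w hw)
          ((A₀ ^ k) (B₀ uu))).mapL L2₀
        have hsW₀' : HasSum (fun j => d₀ j * w ^ j)
            (L2₀ ((Ring.inverse (1 - w • ContinuousLinearMap.adjoint A₀))
              ((A₀ ^ k) (B₀ uu)))) := by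
          convert hsW₀ using 2 with j
          rw [map_smul, smul_eq_mul, mul_comm]
          simp [hd₀, hL2₀]
        rw [hsW'.tsum_eq, hsW₀'.tsum_eq]
        have := congrFun (step1 w hw) k
        simpa [hc, hc₀, hL, hL₀, hL2, hL2₀, ContinuousLinearMap.comp_apply] using this
    -- Rewrite d j as the desired inner product
    have hdj := congrFun step2 j
    have e1 : d j = inner ℂ ((A ^ j) (B vv)) ((A ^ k) (B uu)) := by
      simp only [hd]
      rw [ContinuousLinearMap.adjoint_inner_right]
      have hpow : (ContinuousLinearMap.adjoint A) ^ j = ContinuousLinearMap.adjoint (A ^ j) := by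
        rw [← ContinuousLinearMap.star_eq_adjoint, ← ContinuousLinearMap.star_eq_adjoint,
          star_pow]
      rw [hpow, ContinuousLinearMap.adjoint_inner_right]
    have e2 : d₀ j = inner ℂ ((A₀ ^ j) (B₀ vv)) ((A₀ ^ k) (B₀ uu)) := by
      simp only [hd₀]
      rw [ContinuousLinearMap.adjoint_inner_right]
      have hpow : (ContinuousLinearMap.adjoint A₀) ^ j
          = ContinuousLinearMap.adjoint (A₀ ^ j) := by
        rw [← ContinuousLinearMap.star_eq_adjoint, ← ContinuousLinearMap.star_eq_adjoint,
          star_pow]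
      rw [hpow, ContinuousLinearMap.adjoint_inner_right]
    rw [← e1, ← e2, hdj]
  -- Conclude equality of norms
  have hinner : (inner ℂ (∑ j : Fin (n + 1), (A ^ (j : ℕ)) (B (u j)))
        (∑ k : Fin (n + 1), (A ^ (k : ℕ)) (B (u k))) : ℂ)
      = inner ℂ (∑ j : Fin (n + 1), (A₀ ^ (j : ℕ)) (B₀ (u j)))
        (∑ k : Fin (n + 1), (A₀ ^ (k : ℕ)) (B₀ (u k))) := by
    rw [sum_inner, sum_inner]
    refine Finset.sum_congr rfl fun j _ => ?_
    rw [inner_sum, inner_sum]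
    exact Finset.sum_congr rfl fun k _ => key (u k) (u j) (j : ℕ) (k : ℕ)
  have hsq : ‖∑ k : Fin (n + 1), (A ^ (k : ℕ)) (B (u k))‖ ^ 2
      = ‖∑ k : Fin (n + 1), (A₀ ^ (k : ℕ)) (B₀ (u k))‖ ^ 2 := by
    have hre := congrArg (fun z : ℂ => RCLike.re z) hinner
    simpa only [inner_self_eq_norm_sq] using hre
  calc ‖∑ k : Fin (n + 1), (A ^ (k : ℕ)) (B (u k))‖
      = Real.sqrt (‖∑ k : Fin (n + 1), (A ^ (k : ℕ)) (B (u k))‖ ^ 2) :=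
        (Real.sqrt_sq (norm_nonneg _)).symm
    _ = Real.sqrt (‖∑ k : Fin (n + 1), (A₀ ^ (k : ℕ)) (B₀ (u k))‖ ^ 2) := by rw [hsq]
    _ = ‖∑ k : Fin (n + 1), (A₀ ^ (k : ℕ)) (B₀ (u k))‖ := Real.sqrt_sq (norm_nonneg _)

end
end
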